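/- Let X be a topological space and S_*(X) its singular chain complex with integer coefficients. Let S'_*(X) ⊂ S_*(X) be the subgroup generated by all elements f − sign(τ)·(f ∘ τ), where f: Δ^k → X is a singular k-simplex, τ ranges over permutations of the vertices of Δ^k acting by the induced affine self-map of Δ^k, and k ≥ 0. Then S'_*(X) is a subcomplex: the singular boundary operator maps S'_*(X) into S'_*(X). -/

import Mathlib

open scoped BigOperators
noncomputable section

/-- The standard `k`-simplex, in barycentric coordinates. -/
abbrev Δ (k : ℕ) : Type := ↥(stdSimplex ℝ (Fin (k+1)))

/-- The `p`-th face inclusion `Δ^k → Δ^{k+1}`. -/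
def faceMap (k : ℕ) (p : Fin (k+2)) : C(Δ k, Δ (k+1)) where
  toFun x := ⟨fun j => ∑ i, if p.succAbove i = j then x.1 i else 0, by
    constructor
    · intro j
      refine Finset.sum_nonneg fun i _ => ?_
      by_cases h : p.succAbove i = j
      · simpa [h] using x.2.1 i
      · simp [h]
    · rw [Finset.sum_comm]
      have h1 : ∀ i : Fin (k+1), (∑ j, if p.succAbove i = j then x.1 i else 0) = x.1 i := by
        intro i; simp
      simp_rw [h1]
      exact x.2.2⟩
  continuous_toFun := by
    apply Continuous.subtype_mk
    refine continuous_pi fun j => ?_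
    refine continuous_finset_sum _ fun i _ => ?_
    by_cases h : p.succAbove i = j
    · simp only [h, ↓reduceIte]
      exact (continuous_apply i).comp continuous_subtype_val
    · simpa [h] using continuous_const

/-- The affine action of a permutation of the vertices on the standard simplex. -/
def permMap (k : ℕ) (τ : Equiv.Perm (Fin (k+1))) : C(Δ k, Δ k) where
  toFun x := ⟨fun j => x.1 (τ⁻¹ j), by
    refine ⟨fun j => x.2.1 _, ?_⟩
    rw [Equiv.sum_comp τ⁻¹ x.1]
    exact x.2.2⟩
  continuous_toFun := by
    apply Continuous.subtype_mk
    exact continuous_pi fun j => (continuous_apply _).comp continuous_subtype_val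

/-- Singular `k`-chains with integer coefficients. -/
abbrev chain (X : Type) [TopologicalSpace X] (k : ℕ) : Type := FreeAbelianGroup C(Δ k, X)

/-- The singular boundary operator. -/
def bdry (X : Type) [TopologicalSpace X] (k : ℕ) : chain X (k+1) →+ chain X k :=
  ∑ p : Fin (k+2),
    ((-1 : ℤ)^(p : ℕ)) • FreeAbelianGroup.map (fun f : C(Δ (k+1), X) => f.comp (faceMap k p))

/-- Cycles (in degree `0` every chain is a cycle). -/
def IsCycle (X : Type) [TopologicalSpace X] : ∀ k : ℕ, chain X k → Prop
  | 0, _ => True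
  | (k+1), x => bdry X k x = 0

/-- The subgroup `S'_*(X)` generated by `f - sign τ • (f ∘ τ)`. -/
def Sprime (X : Type) [TopologicalSpace X] (k : ℕ) : AddSubgroup (chain X k) :=
  AddSubgroup.closure
    { x | ∃ (f : C(Δ k, X)) (τ : Equiv.Perm (Fin (k+1))),
        x = FreeAbelianGroup.of f
          - (Equiv.Perm.sign τ : ℤ) • FreeAbelianGroup.of (f.comp (permMap k τ)) }

/-- Pushforward of chains along a continuous map. -/
def chainMap {X Y : Type} [TopologicalSpace X] [TopologicalSpace Y] (g : C(X, Y)) (k : ℕ) :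
    chain X k →+ chain Y k :=
  FreeAbelianGroup.map fun f : C(Δ k, X) => g.comp f

end

/-- For a permutation `τ` of the vertices and a face index `p`, there is a permutation `σ`
of the smaller index set with `τ ∘ succAbove p = succAbove (τ p) ∘ σ` and the expected sign. -/
theorem exists_perm_succAbove {n : ℕ} (τ : Equiv.Perm (Fin (n+2))) (p : Fin (n+2)) :
    ∃ σ : Equiv.Perm (Fin (n+1)),
      (∀ i, τ (p.succAbove i) = (τ p).succAbove (σ i)) ∧
      (Equiv.Perm.sign σ : ℤ)
        = (-1)^(p:ℕ) * (-1)^((τ p : Fin (n+2)) : ℕ) * (Equiv.Perm.sign τ : ℤ) := by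
  set π : Equiv.Perm (Fin (n+2)) := (Fin.cycleRange (τ p)) * τ * (Fin.cycleRange p)⁻¹ with hπdef
  have hp0 : (Fin.cycleRange p)⁻¹ 0 = p := by
    rw [Equiv.Perm.inv_eq_iff_eq]; exact (Fin.cycleRange_self p).symm
  have h0 : π 0 = 0 := by
    simp only [hπdef, Equiv.Perm.mul_apply, hp0, Fin.cycleRange_self]
  set σ := (Equiv.Perm.decomposeFin π).2 with hσdef
  have h1 : (Equiv.Perm.decomposeFin π).1 = 0 := by
    have := Equiv.Perm.decomposeFin_symm_apply_zero
      (Equiv.Perm.decomposeFin π).1 (Equiv.Perm.decomposeFin π).2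
    rw [Equiv.symm_apply_apply] at this
    rw [← this]; exact h0
  have hπ : Equiv.Perm.decomposeFin.symm (0, σ) = π := by
    rw [← h1, hσdef]
    exact Equiv.symm_apply_apply _ _
  have hsucc : ∀ i : Fin (n+1), π i.succ = (σ i).succ := by
    intro i
    rw [← hπ, Equiv.Perm.decomposeFin_symm_apply_succ]
    simp
  refine ⟨σ, fun i => ?_, ?_⟩
  · have hst : (Fin.cycleRange p)⁻¹ i.succ = p.succAbove i := by
      rw [Equiv.Perm.inv_eq_iff_eq]; exact (Fin.cycleRange_succAbove p i).symm
    have := hsucc i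
    rw [hπdef] at this
    simp only [Equiv.Perm.mul_apply, hst] at this
    have h2 : (Fin.cycleRange (τ p)) ((τ p).succAbove (σ i)) = (σ i).succ :=
      Fin.cycleRange_succAbove (τ p) (σ i)
    exact (Fin.cycleRange (τ p)).injective (this.trans h2.symm)
  · have hsign : Equiv.Perm.sign σ = Equiv.Perm.sign π := by
      rw [← hπ, Equiv.Perm.decomposeFin.symm_sign]
      simp
    have : Equiv.Perm.sign π
        = (-1)^((τ p : Fin (n+2)) : ℕ) * Equiv.Perm.sign τ * (-1)^(p:ℕ) := by
      rw [hπdef, map_mul, map_mul, map_inv, Int.units_inv_eq_self, Fin.sign_cycleRange,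
        Fin.sign_cycleRange]
    rw [hsign, this]
    push_cast
    ring

theorem permMap_comp_faceMap {k : ℕ} (τ : Equiv.Perm (Fin (k+2))) (p : Fin (k+2))
    (σ : Equiv.Perm (Fin (k+1))) (h : ∀ i, τ (p.succAbove i) = (τ p).succAbove (σ i)) :
    (permMap (k+1) τ).comp (faceMap k p) = (faceMap k (τ p)).comp (permMap k σ) := by
  ext x j
  show (∑ i, if p.succAbove i = τ⁻¹ j then x.1 i else 0)
      = ∑ i, if (τ p).succAbove i = j then (if True then x.1 (σ⁻¹ i) else 0) else 0
  simp only [if_true]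
  rw [← Equiv.sum_comp σ (fun i => if (τ p).succAbove i = j then x.1 (σ⁻¹ i) else 0)]
  refine Finset.sum_congr rfl fun i _ => ?_
  rw [← h i, show σ⁻¹ (σ i) = i from σ.symm_apply_apply i]
  simp only [Equiv.Perm.eq_inv_iff_eq]

theorem bdry_of (X : Type) [TopologicalSpace X] (k : ℕ) (g : C(Δ (k+1), X)) :
    bdry X k (FreeAbelianGroup.of g)
      = ∑ p : Fin (k+2), ((-1 : ℤ)^(p : ℕ)) • FreeAbelianGroup.of (g.comp (faceMap k p)) := by
  rw [bdry, AddMonoidHom.finset_sum_apply]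
  refine Finset.sum_congr rfl fun p _ => ?_
  rw [AddMonoidHom.smul_apply, FreeAbelianGroup.map_of_apply]


/-- The subgroup `S'_*(X)` generated by the elements
`f - sign τ • (f ∘ τ)` is a subcomplex of the singular chain complex:
the boundary operator maps `S'_{k+1}(X)` into `S'_k(X)`. -/
theorem sprime_isSubcomplex (X : Type) [TopologicalSpace X] (k : ℕ) :
    ∀ x ∈ Sprime X (k+1), bdry X k x ∈ Sprime X k := by
  have H : Sprime X (k+1) ≤ (Sprime X k).comap (bdry X k) := by
    rw [Sprime, AddSubgroup.closure_le]
    rintro x ⟨f, τ, rfl⟩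
    simp only [SetLike.mem_coe, AddSubgroup.mem_comap]
    -- choose the permutations σ p
    choose σ hσ hsign using fun p => exists_perm_succAbove τ p
    have hss : (Equiv.Perm.sign τ : ℤ) * (Equiv.Perm.sign τ : ℤ) = 1 := by
      rw [← Units.val_mul, Int.units_mul_self, Units.val_one]
    have key : bdry X k (FreeAbelianGroup.of f
          - (Equiv.Perm.sign τ : ℤ) • FreeAbelianGroup.of (f.comp (permMap (k+1) τ)))
        = ∑ p : Fin (k+2), ((-1 : ℤ)^((τ p : Fin (k+2)) : ℕ)) •
            (FreeAbelianGroup.of (f.comp (faceMap k (τ p)))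
              - (Equiv.Perm.sign (σ p) : ℤ) •
                FreeAbelianGroup.of ((f.comp (faceMap k (τ p))).comp (permMap k (σ p)))) := by
      rw [map_sub, map_zsmul, bdry_of, bdry_of]
      simp only [smul_sub, Finset.sum_sub_distrib, Finset.smul_sum]
      congr 1
      · exact (Equiv.sum_comp τ fun q =>
          ((-1 : ℤ)^(q : ℕ)) • FreeAbelianGroup.of (f.comp (faceMap k q))).symm
      · refine Finset.sum_congr rfl fun p _ => ?_
        have hcomp : (f.comp (permMap (k+1) τ)).comp (faceMap k p)
            = (f.comp (faceMap k (τ p))).comp (permMap k (σ p)) := by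
          rw [ContinuousMap.comp_assoc, permMap_comp_faceMap τ p (σ p) (hσ p),
            ContinuousMap.comp_assoc]
        rw [hcomp, smul_smul, smul_smul]
        congr 1
        rw [hsign p]
        have h2 : ((-1 : ℤ)^((τ p : Fin (k+2)) : ℕ)) * ((-1 : ℤ)^((τ p : Fin (k+2)) : ℕ)) = 1 := by
          rw [← pow_add, ← two_mul, pow_mul]; norm_num
        linear_combination (-((-1:ℤ)^((p:ℕ))) * ((Equiv.Perm.sign τ : ℤˣ) : ℤ)) * h2
    rw [key]
    refine AddSubgroup.sum_mem _ fun p _ => AddSubgroup.zsmul_mem _ ?_ _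
    exact AddSubgroup.subset_closure ⟨f.comp (faceMap k (τ p)), σ p, rfl⟩
  exact fun x hx => H hx
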